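/- arXiv:1701.07092 — 3 statements merged into one kernel-verified Lean document; each statement's English description precedes it below -/
import Mathlib

section
/- Let $b,c$ be positive integers. For all positive integers $i,j$: $\sum_{s=1}^{\min\{i,j\}} A(b,c,i,s)\cdot C(b,c,s,j) = \binom{b+c}{c+j-i}$, where the binomial coefficient on the right is taken with the convention that it is $0$ unless $0 \le c+j-i \le b+c$. -/
/-- The binomial coefficient for integer arguments, over ℚ:
`n!/((n-k)! k!)` if `0 ≤ k ≤ n`, and `0` otherwise. -/
noncomputable def ibinom (n k : ℤ) : ℚ :=
  if 0 ≤ k ∧ k ≤ n then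
    (Nat.factorial n.toNat : ℚ) / (Nat.factorial (n - k).toNat * Nat.factorial k.toNat)
  else 0

/-- The entry `A(b,c,i,j)` of the lower-triangular factor. -/
noncomputable def Afun (b c i j : ℕ) : ℚ :=
  if j ≤ i ∧ i ≤ c + j then
    (Nat.factorial c * Nat.factorial (i - 1) * Nat.factorial (b + j - 1) : ℚ) /
      (Nat.factorial (j - 1) * Nat.factorial (b + i - 1) * Nat.factorial (i - j) *
        Nat.factorial (c + j - i))
  else 0

/-- The entry `C(b,c,i,j)` of the upper-triangular factor. -/
noncomputable def Cfun (b c i j : ℕ) : ℚ :=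
  if i ≤ j ∧ j ≤ b + i then
    (Nat.factorial b * Nat.factorial (j - 1) * Nat.factorial (b + c + i - 1) : ℚ) /
      (Nat.factorial (b + i - 1) * Nat.factorial (c + j - 1) * Nat.factorial (j - i) *
        Nat.factorial (b + i - j))
  else 0

/-- The entry `D(i)` (last column of the upper-triangular factor), in the
integer parameters `n, m`. -/
noncomputable def Dfun (b c : ℕ) (n m : ℤ) (i : ℕ) : ℚ :=
  ∑ v ∈ Finset.Icc 1 i, (-1 : ℚ) ^ (i - v) *
    ((Nat.factorial (i - 1) * Nat.factorial (b + v - 1) * Nat.factorial (c + i - v - 1) : ℚ) /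
      (Nat.factorial (c - 1) * Nat.factorial (v - 1) * Nat.factorial (b + i - 1) *
        Nat.factorial (i - v))) * ibinom n (m - v)

/-- The entry `B(j)` (last row of the lower-triangular factor), in the
integer parameters `n', m'`. -/
noncomputable def Bfun (b c : ℕ) (n' m' : ℤ) (j : ℕ) : ℚ :=
  ∑ v ∈ Finset.Icc 1 j, (-1 : ℚ) ^ (j - v) *
    ((Nat.factorial (b + j - 1) * Nat.factorial (c + v - 1) * Nat.factorial (b + j - v - 1) : ℚ) /
      (Nat.factorial (b - 1) * Nat.factorial (v - 1) * Nat.factorial (j - v) *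
        Nat.factorial (b + c + j - 1))) * ibinom n' (v - m')

/-- MacMahon's product formula for the number of rhombus tilings of the
semi-regular hexagon with side lengths `a, b, c`. -/
noncomputable def macmahon (a b c : ℕ) : ℚ :=
  ∏ i ∈ Finset.Icc 1 a, ∏ j ∈ Finset.Icc 1 b, ∏ k ∈ Finset.Icc 1 c,
    (((i : ℚ) + j + k - 1) / ((i : ℚ) + j + k - 2))

lemma ibinom_neg {n k : ℤ} (h : k < 0) : ibinom n k = 0 := by
  unfold ibinom; rw [if_neg (by omega : ¬ (0 ≤ k ∧ k ≤ n))]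

lemma ibinom_gt {n k : ℤ} (h : n < k) : ibinom n k = 0 := by
  unfold ibinom; rw [if_neg (by omega : ¬ (0 ≤ k ∧ k ≤ n))]

lemma ibinom_natCast (n k : ℕ) : ibinom (n:ℤ) (k:ℤ) = (n.choose k : ℚ) := by
  by_cases h : k ≤ n
  · unfold ibinom
    rw [if_pos ⟨Int.natCast_nonneg k, by exact_mod_cast h⟩]
    rw [Nat.cast_choose ℚ h]
    have h1 : ((n:ℤ) - (k:ℤ)).toNat = n - k := by omega
    have h2 : ((n:ℤ)).toNat = n := by omega
    have h3 : ((k:ℤ)).toNat = k := by omega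
    rw [h1, h2, h3]
    ring
  · rw [ibinom_gt (by exact_mod_cast lt_of_not_ge h), Nat.choose_eq_zero_of_lt (lt_of_not_ge h)]
    simp

lemma ibinom_absorb (n k : ℤ) :
    (k:ℚ) * ibinom n k = ((n:ℚ) - (k:ℚ) + 1) * ibinom n (k-1) := by
  rcases lt_or_ge k 0 with hk | hk
  · rw [ibinom_neg hk, ibinom_neg (by omega : k-1 < 0)]; ring
  rcases lt_or_ge n k with hn | hn
  · rw [ibinom_gt hn]
    rcases eq_or_lt_of_le (by omega : n ≤ k-1) with he | hl
    · have hc : ((n:ℚ) - (k:ℚ) + 1) = 0 := by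
        have : k = n + 1 := by omega
        subst this; push_cast; ring
      rw [hc]; ring
    · rw [ibinom_gt hl]; ring
  · obtain ⟨K, rfl⟩ := Int.eq_ofNat_of_zero_le hk
    obtain ⟨N, rfl⟩ := Int.eq_ofNat_of_zero_le (le_trans hk hn)
    have hKN : K ≤ N := by exact_mod_cast hn
    rcases Nat.eq_zero_or_pos K with rfl | hK
    · have h0 : ibinom (N:ℤ) (((0:ℕ):ℤ) - 1) = 0 := ibinom_neg (by simp)
      rw [h0]
      push_cast; ring
    · have h1 : ((K:ℤ) - 1) = ((K-1 : ℕ) : ℤ) := by omega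
      rw [h1, ibinom_natCast, ibinom_natCast]
      have hid := Nat.choose_succ_right_eq N (K-1)
      rw [(by omega : K - 1 + 1 = K)] at hid
      have hcast : ((N.choose K : ℚ)) * K = (N.choose (K-1) : ℚ) * ((N:ℚ) - ((K:ℚ) - 1)) := by
        have h2 : ((N.choose K * K : ℕ) : ℚ) = ((N.choose (K-1) * (N - (K-1)) : ℕ) : ℚ) := by
          exact_mod_cast hid
        push_cast [Nat.cast_sub (by omega : K - 1 ≤ N), Nat.cast_sub (by omega : 1 ≤ K)] at h2
        linarith [h2]
      push_cast
      linear_combination hcast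

lemma ibinom_succ (n k : ℤ) :
    ((n:ℚ) + 1 - (k:ℚ)) * ibinom (n+1) k = ((n:ℚ) + 1) * ibinom n k := by
  rcases lt_or_ge k 0 with hk | hk
  · rw [ibinom_neg hk, ibinom_neg hk]; ring
  rcases lt_or_ge n k with hn | hn
  · rw [ibinom_gt hn]
    by_cases he : k = n + 1
    · have hc : ((n:ℚ) + 1 - (k:ℚ)) = 0 := by
        subst he; push_cast; ring
      rw [hc]; ring
    · rw [ibinom_gt (by omega : n + 1 < k)]; ring
  · obtain ⟨K, rfl⟩ := Int.eq_ofNat_of_zero_le hk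
    obtain ⟨N, rfl⟩ := Int.eq_ofNat_of_zero_le (le_trans hk hn)
    have hKN : K ≤ N := by exact_mod_cast hn
    have h1 : ((N:ℤ) + 1) = ((N+1 : ℕ) : ℤ) := by omega
    rw [h1, ibinom_natCast, ibinom_natCast]
    have hid1 := Nat.add_one_mul_choose_eq N K
    have hid2 := Nat.choose_succ_right_eq (N+1) K
    have hcast : ((N:ℚ) + 1) * (N.choose K : ℚ) = ((N+1).choose K : ℚ) * ((N:ℚ) + 1 - K) := by
      have h3 : (N+1) * N.choose K = (N+1).choose K * (N+1-K) := by
        rw [← hid2]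
        simpa [Nat.succ_eq_add_one] using hid1
      have h4 : (((N+1) * N.choose K : ℕ) : ℚ) = (((N+1).choose K * (N+1-K) : ℕ) : ℚ) := by
        exact_mod_cast h3
      push_cast [Nat.cast_sub (by omega : K ≤ N + 1)] at h4
      linarith [h4]
    push_cast
    linear_combination -hcast

lemma ibinom_zero {n : ℤ} (h : 0 ≤ n) : ibinom n 0 = 1 := by
  obtain ⟨N, rfl⟩ := Int.eq_ofNat_of_zero_le h
  rw [show (0:ℤ) = ((0:ℕ):ℤ) by norm_num, ibinom_natCast]
  simp

noncomputable def Fq (b c : ℕ) (j : ℤ) (i s : ℕ) : ℚ :=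
  ibinom (c:ℤ) ((i:ℤ) - (s:ℤ)) * ibinom (b:ℤ) (j - (s:ℤ)) *
    ibinom ((b:ℤ) + (c:ℤ) + (s:ℤ) - 1) ((b:ℤ) + (c:ℤ))

noncomputable def Gq (b c : ℕ) (j : ℤ) (i s : ℕ) : ℚ :=
  (1 - (s:ℚ)) * ((b:ℚ) - (j:ℚ) + (s:ℚ)) * ibinom (c:ℤ) ((i:ℤ) - (s:ℤ) + 1) *
    ibinom (b:ℤ) (j - (s:ℤ)) * ibinom ((b:ℤ) + (c:ℤ) + (s:ℤ) - 1) ((b:ℤ) + (c:ℤ))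

lemma cert (b c : ℕ) (j : ℤ) (i s : ℕ) :
    (i:ℚ) * ((b:ℚ) + (i:ℚ) - (j:ℚ) + 1) * Fq b c j (i+1) s
      - ((b:ℚ) + (i:ℚ)) * ((c:ℚ) + (j:ℚ) - (i:ℚ)) * Fq b c j i s
      = Gq b c j i (s+1) - Gq b c j i s := by
  simp only [Fq, Gq, Nat.cast_add, Nat.cast_one]
  rw [show ((i:ℤ) + 1 - (s:ℤ)) = ((i:ℤ) - s + 1) from by ring]
  rw [show ((i:ℤ) - ((s:ℤ)+1) + 1) = ((i:ℤ) - s) from by ring]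
  rw [show ((b:ℤ) + c + ((s:ℤ)+1) - 1) = ((b:ℤ) + c + s) from by ring]
  rw [show (j - ((s:ℤ)+1)) = (j - s - 1) from by ring]
  have hR1 := ibinom_absorb (c:ℤ) ((i:ℤ) - s + 1)
  rw [show ((i:ℤ) - s + 1 - 1) = ((i:ℤ) - s) from by ring] at hR1
  push_cast at hR1
  have hR2 := ibinom_absorb (b:ℤ) (j - (s:ℤ))
  push_cast at hR2
  have hR3 := ibinom_succ ((b:ℤ) + c + s - 1) ((b:ℤ) + c)
  rw [show ((b:ℤ) + c + s - 1 + 1) = ((b:ℤ) + c + s) from by ring] at hR3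
  push_cast at hR3
  linear_combination
    ((s:ℚ) + (b:ℚ) + (i:ℚ) - (j:ℚ)) * ibinom (b:ℤ) (j - (s:ℤ))
        * ibinom ((b:ℤ) + c + s - 1) ((b:ℤ) + c) * hR1
    - (s:ℚ) * ibinom (c:ℤ) ((i:ℤ) - s) * ibinom ((b:ℤ) + c + s) ((b:ℤ) + c) * hR2
    + ((j:ℚ) - (s:ℚ)) * ibinom (c:ℤ) ((i:ℤ) - s) * ibinom (b:ℤ) (j - (s:ℤ)) * hR3

lemma ibinom_self {n : ℤ} (h : 0 ≤ n) : ibinom n n = 1 := by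
  obtain ⟨N, rfl⟩ := Int.eq_ofNat_of_zero_le h
  rw [ibinom_natCast]
  simp

lemma key (b c : ℕ) (j : ℤ) (i : ℕ) :
    ∑ s ∈ Finset.range (i+1), Fq b c j i s
      = ibinom ((b:ℤ) + (i:ℤ) - 1) (j - 1) * ibinom ((c:ℤ) + j - 1) ((i:ℤ) - 1) := by
  induction i with
  | zero =>
    rw [Finset.sum_range_one]
    simp only [Fq, Nat.cast_zero]
    have h1 : ibinom ((b:ℤ) + (c:ℤ) + (0:ℤ) - 1) ((b:ℤ)+(c:ℤ)) = 0 := ibinom_gt (by omega)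
    have h2 : ibinom ((c:ℤ) + j - 1) ((0:ℤ) - 1) = 0 := ibinom_neg (by omega)
    rw [h1, h2]
    ring
  | succ i ih =>
    rcases Nat.eq_zero_or_pos i with rfl | hi
    · rw [Finset.sum_range_succ, Finset.sum_range_one]
      simp only [Fq]
      push_cast
      have h1 : ibinom ((b:ℤ) + (c:ℤ) + (0:ℤ) - 1) ((b:ℤ)+(c:ℤ)) = 0 := ibinom_gt (by omega)
      rw [show ((b:ℤ) + c + 1 - 1) = ((b:ℤ)+c) from by ring,
        show ((b:ℤ) + 1 - 1) = (b:ℤ) from by ring, h1]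
      rw [ibinom_zero (by positivity : (0:ℤ) ≤ (c:ℤ)),
        ibinom_self (by positivity : (0:ℤ) ≤ (b:ℤ)+(c:ℤ))]
      by_cases hcj : 0 ≤ (c:ℤ) + j - 1
      · rw [ibinom_zero hcj]; ring
      · rw [ibinom_gt (show (c:ℤ) + j - 1 < 0 by omega), ibinom_neg (by omega : j - 1 < 0)]
        ring
    · by_cases hj : j = (b:ℤ) + (i:ℤ) + 1
      · subst hj
        rw [Finset.sum_eq_single_of_mem (i+1) (by simp)]
        · simp only [Fq]
          push_cast
          rw [show ((i:ℤ) + 1 - ((i:ℤ)+1)) = 0 from by ring,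
            show ((b:ℤ) + (i:ℤ) + 1 - ((i:ℤ)+1)) = (b:ℤ) from by ring,
            show ((b:ℤ) + c + ((i:ℤ)+1) - 1) = ((b:ℤ) + c + i) from by ring,
            show ((b:ℤ) + ((i:ℤ) + 1) - 1) = ((b:ℤ) + (i:ℤ)) from by ring,
            show ((b:ℤ) + (i:ℤ) + 1 - 1) = ((b:ℤ) + (i:ℤ)) from by ring,
            show ((c:ℤ) + ((b:ℤ) + i + 1) - 1) = ((b:ℤ) + c + i) from by ring,
            show ((i:ℤ) + 1 - 1) = (i:ℤ) from by ring]
          rw [ibinom_zero (by positivity : (0:ℤ) ≤ (c:ℤ)),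
            ibinom_self (by positivity : (0:ℤ) ≤ (b:ℤ)),
            ibinom_self (by positivity : (0:ℤ) ≤ (b:ℤ)+(i:ℤ))]
          have e1 : ((b:ℤ) + (c:ℤ) + (i:ℤ)) = ((b+c+i : ℕ) : ℤ) := by push_cast; ring
          have e2 : ((b:ℤ) + (c:ℤ)) = ((b+c : ℕ) : ℤ) := by push_cast; ring
          rw [e1, e2, show ((i:ℤ)) = ((i:ℕ):ℤ) from rfl, ibinom_natCast, ibinom_natCast]
          have hsym := Nat.choose_symm (show i ≤ b+c+i by omega)
          rw [show b+c+i-i = b+c from by omega] at hsym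
          rw [hsym]
          ring
        · intro s hs hne
          have hsi : s ≤ i := by simp at hs; omega
          simp only [Fq]
          have hz : ibinom (b:ℤ) ((b:ℤ) + (i:ℤ) + 1 - (s:ℤ)) = 0 := by
            apply ibinom_gt
            have : (s:ℤ) ≤ (i:ℤ) := by exact_mod_cast hsi
            omega
          rw [hz]; ring
      · -- main recurrence case
        have hp1 : ((i:ℚ)) ≠ 0 := by positivity
        have hp2 : ((b:ℚ) + (i:ℚ) - (j:ℚ) + 1) ≠ 0 := by
          have h0 : ((b:ℤ) + (i:ℤ) - j + 1) ≠ 0 := by omega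
          have h0' : (((b:ℤ) + (i:ℤ) - j + 1 : ℤ) : ℚ) ≠ 0 := Int.cast_ne_zero.mpr h0
          push_cast at h0'
          exact h0'
        have hsum : ∑ s ∈ Finset.range (i+1+1),
            ((i:ℚ) * ((b:ℚ) + (i:ℚ) - (j:ℚ) + 1) * Fq b c j (i+1) s
              - ((b:ℚ) + (i:ℚ)) * ((c:ℚ) + (j:ℚ) - (i:ℚ)) * Fq b c j i s)
            = ∑ s ∈ Finset.range (i+1+1), (Gq b c j i (s+1) - Gq b c j i s) :=
          Finset.sum_congr rfl (fun s _ => cert b c j i s)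
        rw [Finset.sum_range_sub (fun s => Gq b c j i s) (i+1+1)] at hsum
        have hG2 : Gq b c j i (i+1+1) = 0 := by
          simp only [Gq]
          have hz : ibinom (c:ℤ) ((i:ℤ) - ((i+1+1:ℕ):ℤ) + 1) = 0 := by
            apply ibinom_neg; push_cast; omega
          rw [hz]; ring
        have hG0 : Gq b c j i 0 = 0 := by
          simp only [Gq, Nat.cast_zero]
          have hz : ibinom ((b:ℤ) + (c:ℤ) + (0:ℤ) - 1) ((b:ℤ)+(c:ℤ)) = 0 :=
            ibinom_gt (by omega)
          rw [hz]; ring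
        rw [hG2, hG0, sub_zero, Finset.sum_sub_distrib, ← Finset.mul_sum, ← Finset.mul_sum]
          at hsum
        have hFtop : Fq b c j i (i+1) = 0 := by
          simp only [Fq]
          have hz : ibinom (c:ℤ) ((i:ℤ) - ((i+1:ℕ):ℤ)) = 0 := by
            apply ibinom_neg; push_cast; omega
          rw [hz]; ring
        rw [Finset.sum_range_succ (fun s => Fq b c j i s) (i+1)] at hsum
        simp only [hFtop, add_zero] at hsum
        rw [ih] at hsum
        set X := ibinom ((b:ℤ) + (i:ℤ) - 1) (j - 1) with hX
        set Y := ibinom ((c:ℤ) + j - 1) ((i:ℤ) - 1) with hY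
        have hU := ibinom_succ ((b:ℤ) + (i:ℤ) - 1) (j - 1)
        rw [show ((b:ℤ) + (i:ℤ) - 1 + 1) = ((b:ℤ) + (i:ℤ)) from by ring] at hU
        push_cast at hU
        have hV := ibinom_absorb ((c:ℤ) + j - 1) ((i:ℤ))
        push_cast at hV
        set X' := ibinom ((b:ℤ) + (i:ℤ)) (j - 1) with hX'
        set Y' := ibinom ((c:ℤ) + j - 1) ((i:ℤ)) with hY'
        have hkey : ((b:ℚ) + (i:ℚ)) * ((c:ℚ) + (j:ℚ) - (i:ℚ)) * (X * Y)
            = (i:ℚ) * ((b:ℚ) + (i:ℚ) - (j:ℚ) + 1) * (X' * Y') := by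
          linear_combination (-(i:ℚ)) * Y' * hU + (-((b:ℚ)+(i:ℚ))) * X * hV
        have hgoalrw : ibinom ((b:ℤ) + ((i+1:ℕ):ℤ) - 1) (j - 1) = X' := by
          rw [hX']; congr 1; push_cast; ring
        have hgoalrw2 : ibinom ((c:ℤ) + j - 1) (((i+1:ℕ):ℤ) - 1) = Y' := by
          rw [hY']; congr 1; push_cast; ring
        rw [hgoalrw, hgoalrw2]
        apply mul_left_cancel₀ (mul_ne_zero hp1 hp2)
        linear_combination hsum + hkey

lemma cancel_aux (A x y : ℚ) (hx : x ≠ 0) (hy : y ≠ 0) : A * x * y * x⁻¹ * y⁻¹ = A := by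
  calc A * x * y * x⁻¹ * y⁻¹ = A * (x * x⁻¹) * (y * y⁻¹) := by ring
  _ = A := by rw [mul_inv_cancel₀ hx, mul_inv_cancel₀ hy, mul_one, mul_one]

/-- for positive integers `b, c, i, j`,
`∑_{s=1}^{min(i,j)} A(b,c,i,s) ⬝ C(b,c,s,j) = binom(b+c, c+j-i)`. -/
theorem statement_0 (b c : ℕ) (hb : 0 < b) (hc : 0 < c) (i j : ℕ) (hi : 0 < i) (hj : 0 < j) :
    ∑ s ∈ Finset.Icc 1 (min i j), Afun b c i s * Cfun b c s j
      = ibinom ((b : ℤ) + c) ((c : ℤ) + j - i) := by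
  set K : ℚ := ((b+c).factorial * (i-1).factorial * (j-1).factorial : ℚ) /
      ((b+i-1).factorial * (c+j-1).factorial) with hK
  have hfac : ∀ n : ℕ, ((n.factorial : ℚ)) ≠ 0 :=
    fun n => Nat.cast_ne_zero.mpr (Nat.factorial_ne_zero n)
  have hx0 : (((b+i-1).factorial : ℚ)) ≠ 0 := hfac _
  have hy0 : (((c+j-1).factorial : ℚ)) ≠ 0 := hfac _
  have hpt : ∀ s ∈ Finset.Icc 1 (min i j),
      Afun b c i s * Cfun b c s j = K * Fq b c (j:ℤ) i s := by
    intro s hs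
    rw [Finset.mem_Icc] at hs
    obtain ⟨hs1, hs2⟩ := hs
    have hsi : s ≤ i := le_trans hs2 (min_le_left _ _)
    have hsj : s ≤ j := le_trans hs2 (min_le_right _ _)
    by_cases h1 : i ≤ c + s
    · by_cases h2 : j ≤ b + s
      · unfold Afun Cfun Fq
        rw [if_pos ⟨hsi, h1⟩, if_pos ⟨hsj, h2⟩]
        rw [show (i:ℤ) - (s:ℤ) = ((i - s : ℕ) : ℤ) from by omega,
          show (j:ℤ) - (s:ℤ) = ((j - s : ℕ) : ℤ) from by omega,
          show (b:ℤ) + (c:ℤ) + (s:ℤ) - 1 = ((b+c+s-1 : ℕ) : ℤ) from by omega,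
          show (b:ℤ) + (c:ℤ) = ((b+c : ℕ) : ℤ) from by push_cast; ring,
          ibinom_natCast, ibinom_natCast, ibinom_natCast]
        rw [Nat.cast_choose ℚ (show i - s ≤ c from by omega),
          Nat.cast_choose ℚ (show j - s ≤ b from by omega),
          Nat.cast_choose ℚ (show b + c ≤ b+c+s-1 from by omega)]
        rw [show c - (i - s) = c + s - i from by omega,
          show b - (j - s) = b + s - j from by omega,
          show b+c+s-1 - (b+c) = s - 1 from by omega]
        field_simp [hfac]
        rw [hK, mul_comm _ (_ / _), div_mul_cancel₀ _ (mul_ne_zero hx0 hy0)]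
        ring
      · unfold Cfun Fq
        rw [if_neg (by omega), show (j:ℤ) - (s:ℤ) = ((j:ℤ) - s) from rfl]
        have hz : ibinom (b:ℤ) ((j:ℤ) - (s:ℤ)) = 0 := ibinom_gt (by omega)
        rw [hz]; ring
    · unfold Afun Fq
      rw [if_neg (by omega)]
      have hz : ibinom (c:ℤ) ((i:ℤ) - (s:ℤ)) = 0 := ibinom_gt (by omega)
      rw [hz]; ring
  rw [Finset.sum_congr rfl hpt, ← Finset.mul_sum]
  have hsub : Finset.Icc 1 (min i j) ⊆ Finset.range (i+1) := by
    intro x hx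
    rw [Finset.mem_Icc] at hx
    rw [Finset.mem_range]
    omega
  have hzero : ∀ x ∈ Finset.range (i+1), x ∉ Finset.Icc 1 (min i j) →
      Fq b c (j:ℤ) i x = 0 := by
    intro x hx hnx
    rw [Finset.mem_range] at hx
    rw [Finset.mem_Icc] at hnx
    push_neg at hnx
    rcases Nat.eq_zero_or_pos x with rfl | hx1
    · unfold Fq
      have hz : ibinom ((b:ℤ) + (c:ℤ) + ((0:ℕ):ℤ) - 1) ((b:ℤ)+(c:ℤ)) = 0 :=
        ibinom_gt (by push_cast; omega)
      rw [hz]; ring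
    · have hxj : j < x := by have := hnx hx1; omega
      unfold Fq
      have hz : ibinom (b:ℤ) ((j:ℤ) - (x:ℤ)) = 0 := ibinom_neg (by omega)
      rw [hz]; ring
  rw [Finset.sum_subset hsub hzero, key b c (j:ℤ) i]
  by_cases hA : j ≤ b + i
  · by_cases hB : i ≤ c + j
    · rw [show (b:ℤ) + (i:ℤ) - 1 = ((b+i-1 : ℕ):ℤ) from by omega,
        show (j:ℤ) - 1 = ((j-1 : ℕ):ℤ) from by omega,
        show (c:ℤ) + (j:ℤ) - 1 = ((c+j-1 : ℕ):ℤ) from by omega,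
        show (i:ℤ) - 1 = ((i-1 : ℕ):ℤ) from by omega,
        show (b:ℤ) + (c:ℤ) = ((b+c : ℕ):ℤ) from by push_cast; ring,
        show (c:ℤ) + (j:ℤ) - (i:ℤ) = ((c+j-i : ℕ):ℤ) from by omega,
        ibinom_natCast, ibinom_natCast, ibinom_natCast]
      rw [Nat.cast_choose ℚ (show j - 1 ≤ b+i-1 from by omega),
        Nat.cast_choose ℚ (show i - 1 ≤ c+j-1 from by omega),
        Nat.cast_choose ℚ (show c+j-i ≤ b+c from by omega)]
      rw [show b+i-1 - (j-1) = b+i-j from by omega,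
        show c+j-1 - (i-1) = c+j-i from by omega,
        show b+c - (c+j-i) = b+i-j from by omega]
      rw [hK]
      field_simp [hfac]
    · have hz1 : ibinom ((c:ℤ) + (j:ℤ) - 1) ((i:ℤ) - 1) = 0 := ibinom_gt (by omega)
      have hz2 : ibinom ((b:ℤ) + (c:ℤ)) ((c:ℤ) + (j:ℤ) - (i:ℤ)) = 0 := ibinom_neg (by omega)
      rw [hz1, hz2]; ring
  · have hz1 : ibinom ((b:ℤ) + (i:ℤ) - 1) ((j:ℤ) - 1) = 0 := ibinom_gt (by omega)
    have hz2 : ibinom ((b:ℤ) + (c:ℤ)) ((c:ℤ) + (j:ℤ) - (i:ℤ)) = 0 := ibinom_gt (by omega)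
    rw [hz1, hz2]; ring
end

section
/- Let $b,c$ be positive integers and define $T(i,j) := \sum_{s=1}^{\min\{i,j\}} A(b,c,i,s)\cdot C(b,c,s,j)$. Then for all positive integers $i,j$: $(b+i-j+1)\cdot T(i+1,j) + (i-j-c)\cdot T(i,j) = 0$. -/
section Aux

lemma Afun_of_pos (b c i j : ℕ) (h1 : j ≤ i) (h2 : i ≤ c + j) :
    Afun b c i j =
      (Nat.factorial c * Nat.factorial (i - 1) * Nat.factorial (b + j - 1) : ℚ) /
        (Nat.factorial (j - 1) * Nat.factorial (b + i - 1) * Nat.factorial (i - j) *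
          Nat.factorial (c + j - i)) := by
  rw [Afun, if_pos ⟨h1, h2⟩]

lemma Afun_of_neg (b c i j : ℕ) (h : ¬(j ≤ i ∧ i ≤ c + j)) : Afun b c i j = 0 := by
  rw [Afun, if_neg h]

lemma Cfun_of_pos (b c i j : ℕ) (h1 : i ≤ j) (h2 : j ≤ b + i) :
    Cfun b c i j =
      (Nat.factorial b * Nat.factorial (j - 1) * Nat.factorial (b + c + i - 1) : ℚ) /
        (Nat.factorial (b + i - 1) * Nat.factorial (c + j - 1) * Nat.factorial (j - i) *
          Nat.factorial (b + i - j)) := by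
  rw [Cfun, if_pos ⟨h1, h2⟩]

lemma Cfun_of_neg (b c i j : ℕ) (h : ¬(i ≤ j ∧ j ≤ b + i)) : Cfun b c i j = 0 := by
  rw [Cfun, if_neg h]

lemma fne (n : ℕ) : (Nat.factorial n : ℚ) ≠ 0 := by
  exact_mod_cast n.factorial_pos.ne'

lemma fmul4 (a b c d : ℕ) :
    ((Nat.factorial a : ℚ) * Nat.factorial b * Nat.factorial c * Nat.factorial d) ≠ 0 :=
  mul_ne_zero (mul_ne_zero (mul_ne_zero (fne a) (fne b)) (fne c)) (fne d)

/-- Ratio of `A(i+1,s)` to `A(i,s)`. -/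
lemma stepA1 (b c i s : ℕ) (hs : 1 ≤ s) (h2a : s ≤ i) (h4 : i + 1 ≤ c + s) :
    ((b : ℚ) + i) * ((i : ℚ) + 1 - s) * Afun b c (i + 1) s
      = (i : ℚ) * ((c : ℚ) + s - i) * Afun b c i s := by
  rw [Afun_of_pos b c (i + 1) s (by omega) (by omega),
      Afun_of_pos b c i s (by omega) (by omega)]
  rw [show i + 1 - 1 = (i - 1) + 1 by omega,
      show b + (i + 1) - 1 = (b + i - 1) + 1 by omega,
      show i + 1 - s = (i - s) + 1 by omega,
      show c + s - i = (c + s - (i + 1)) + 1 by omega]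
  rw [← mul_div_assoc, ← mul_div_assoc, div_eq_div_iff (fmul4 _ _ _ _) (fmul4 _ _ _ _)]
  simp only [Nat.factorial_succ]
  push_cast [Nat.cast_sub (show 1 ≤ i by omega), Nat.cast_sub (show 1 ≤ s by omega),
    Nat.cast_sub (show 1 ≤ b + i by omega), Nat.cast_sub (show s ≤ i by omega),
    Nat.cast_sub (show i + 1 ≤ c + s by omega)]
  ring

/-- Ratio of `A(i+1,s+1)` to `A(i,s)`. -/
lemma stepA2 (b c i s : ℕ) (hs : 1 ≤ s) (h2a : s ≤ i) (h2b : i ≤ c + s) :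
    (s : ℚ) * ((b : ℚ) + i) * Afun b c (i + 1) (s + 1)
      = (i : ℚ) * ((b : ℚ) + s) * Afun b c i s := by
  rw [Afun_of_pos b c (i + 1) (s + 1) (by omega) (by omega),
      Afun_of_pos b c i s (by omega) (by omega)]
  rw [show i + 1 - 1 = (i - 1) + 1 by omega,
      show b + (i + 1) - 1 = (b + i - 1) + 1 by omega,
      show s + 1 - 1 = (s - 1) + 1 by omega,
      show b + (s + 1) - 1 = (b + s - 1) + 1 by omega,
      show i + 1 - (s + 1) = i - s by omega,
      show c + (s + 1) - (i + 1) = c + s - i by omega]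
  rw [← mul_div_assoc, ← mul_div_assoc, div_eq_div_iff (fmul4 _ _ _ _) (fmul4 _ _ _ _)]
  simp only [Nat.factorial_succ]
  push_cast [Nat.cast_sub (show 1 ≤ i by omega), Nat.cast_sub (show 1 ≤ s by omega),
    Nat.cast_sub (show 1 ≤ b + i by omega), Nat.cast_sub (show 1 ≤ b + s by omega)]
  ring

/-- Ratio of `C(s+1,j)` to `C(s,j)`. -/
lemma stepC (b c s j : ℕ) (hs : 1 ≤ s) (h5 : s + 1 ≤ j) (h3b : j ≤ b + s) :
    ((b : ℚ) + s) * ((b : ℚ) + s + 1 - j) * Cfun b c (s + 1) j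
      = ((b : ℚ) + c + s) * ((j : ℚ) - s) * Cfun b c s j := by
  rw [Cfun_of_pos b c (s + 1) j (by omega) (by omega),
      Cfun_of_pos b c s j (by omega) (by omega)]
  rw [show b + (s + 1) - 1 = (b + s - 1) + 1 by omega,
      show b + c + (s + 1) - 1 = (b + c + s - 1) + 1 by omega,
      show j - s = (j - (s + 1)) + 1 by omega,
      show b + (s + 1) - j = (b + s - j) + 1 by omega]
  rw [← mul_div_assoc, ← mul_div_assoc, div_eq_div_iff (fmul4 _ _ _ _) (fmul4 _ _ _ _)]
  simp only [Nat.factorial_succ]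
  push_cast [Nat.cast_sub (show 1 ≤ b + s by omega),
    Nat.cast_sub (show 1 ≤ b + c + s by omega),
    Nat.cast_sub (show s + 1 ≤ j by omega),
    Nat.cast_sub (show j ≤ b + s by omega)]
  ring

/-- The telescoping certificate (scaled by `i`). -/
noncomputable def Gcert (b c i j s : ℕ) : ℚ :=
  ((s : ℚ) - 1) * ((b : ℚ) + s - j) * (Afun b c (i + 1) s * Cfun b c s j)

lemma telescope (f : ℕ → ℚ) : ∀ N, ∑ s ∈ Finset.Icc 1 N, (f s - f (s + 1)) = f 1 - f (N + 1)
  | 0 => by simp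
  | N + 1 => by
    rw [Finset.sum_Icc_succ_top (by omega), telescope f N]; ring

set_option maxHeartbeats 1000000 in
lemma key_s1 (b c i j s : ℕ) (hb : 0 < b) (hc : 0 < c) (hi : 0 < i) (hj : 0 < j) (hs : 1 ≤ s) :
    (i : ℚ) * (((b : ℚ) + i - j + 1) * (Afun b c (i + 1) s * Cfun b c s j))
      + (i : ℚ) * (((i : ℚ) - j - c) * (Afun b c i s * Cfun b c s j))
      = Gcert b c i j s - Gcert b c i j (s + 1) := by
  have hbq : (0 : ℚ) < b := by exact_mod_cast hb
  have hiq : (0 : ℚ) < i := by exact_mod_cast hi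
  have hsq : (0 : ℚ) < s := by exact_mod_cast hs
  by_cases h2 : s ≤ i ∧ i ≤ c + s
  · obtain ⟨h2a, h2b⟩ := h2
    have hsiq : (s : ℚ) ≤ i := by exact_mod_cast h2a
    have n1 : ((b : ℚ) + i) ≠ 0 := by positivity
    have n2 : ((i : ℚ) + 1 - s) ≠ 0 := by nlinarith
    have hA2' : Afun b c (i + 1) (s + 1)
        = (i : ℚ) * ((b : ℚ) + s) / ((s : ℚ) * ((b : ℚ) + i)) * Afun b c i s := by
      rw [div_mul_eq_mul_div, eq_div_iff (mul_ne_zero hsq.ne' n1)]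
      linear_combination stepA2 b c i s hs h2a h2b
    by_cases h3 : s ≤ j ∧ j ≤ b + s
    · obtain ⟨h3a, h3b⟩ := h3
      have hjq : (j : ℚ) ≤ (b : ℚ) + s := by
        have : (j : ℚ) ≤ ((b + s : ℕ) : ℚ) := by exact_mod_cast h3b
        push_cast at this; linarith
      have n5 : ((b : ℚ) + s + 1 - j) ≠ 0 := by nlinarith
      by_cases h4 : i + 1 ≤ c + s
      · have hY' : Afun b c (i + 1) s
            = (i : ℚ) * ((c : ℚ) + s - i) / (((b : ℚ) + i) * ((i : ℚ) + 1 - s))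
                * Afun b c i s := by
          rw [div_mul_eq_mul_div, eq_div_iff (mul_ne_zero n1 n2)]
          linear_combination stepA1 b c i s hs h2a h4
        by_cases h5 : s + 1 ≤ j
        · -- generic case
          have hC' : Cfun b c (s + 1) j
              = ((b : ℚ) + c + s) * ((j : ℚ) - s)
                  / (((b : ℚ) + s) * ((b : ℚ) + s + 1 - j)) * Cfun b c s j := by
            rw [div_mul_eq_mul_div, eq_div_iff (mul_ne_zero (by positivity) n5)]
            linear_combination stepC b c s j hs h5 h3b
          rw [Gcert, Gcert, hY', hA2', hC']
          push_cast
          field_simp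
          ring
        · -- j = s
          have hjs : j = s := by omega
          subst hjs
          rw [Gcert, Gcert, Cfun_of_neg b c (j + 1) j (by omega), hY']
          push_cast
          field_simp
          ring
      · -- i = c + s
        have hics : i = c + s := by omega
        subst hics
        rw [Gcert, Gcert, Afun_of_neg b c (c + s + 1) s (by omega)]
        by_cases h5 : s + 1 ≤ j
        · have hC' : Cfun b c (s + 1) j
              = ((b : ℚ) + c + s) * ((j : ℚ) - s)
                  / (((b : ℚ) + s) * ((b : ℚ) + s + 1 - j)) * Cfun b c s j := by
            rw [div_mul_eq_mul_div, eq_div_iff (mul_ne_zero (by positivity) n5)]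
            linear_combination stepC b c s j hs h5 h3b
          rw [hA2', hC']
          push_cast at *
          field_simp
          ring
        · -- j = s as well: both sides vanish
          have hjs : j = s := by omega
          subst hjs
          rw [Cfun_of_neg b c (j + 1) j (by omega)]
          push_cast
          ring
    · -- C(s,j) = 0
      rw [Gcert, Gcert, Cfun_of_neg b c s j h3]
      by_cases h5 : s + 1 ≤ j
      · by_cases h6 : j ≤ b + s + 1
        · have hj' : j = b + s + 1 := by omega
          subst hj'
          push_cast
          ring
        · rw [Cfun_of_neg b c (s + 1) j (by omega)]
          ring
      · rw [Cfun_of_neg b c (s + 1) j (by omega)]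
        ring
  · -- A(i,s) and A(i+1,s+1) vanish
    by_cases hsi : s ≤ i
    · -- then i > c + s : all A's vanish
      rw [Gcert, Gcert, Afun_of_neg b c (i + 1) s (by omega),
          Afun_of_neg b c i s (by omega), Afun_of_neg b c (i + 1) (s + 1) (by omega)]
      ring
    · by_cases hsi1 : s ≤ i + 1
      · -- s = i + 1
        have hsv : s = i + 1 := by omega
        subst hsv
        rw [Gcert, Gcert, Afun_of_neg b c i (i + 1) (by omega),
            Afun_of_neg b c (i + 1) (i + 1 + 1) (by omega)]
        push_cast
        ring
      · rw [Gcert, Gcert, Afun_of_neg b c (i + 1) s (by omega),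
            Afun_of_neg b c i s (by omega), Afun_of_neg b c (i + 1) (s + 1) (by omega)]
        ring

end Aux
/-- with `T(i,j) = ∑_{s=1}^{min(i,j)} A(b,c,i,s) ⬝ C(b,c,s,j)`,
`(b+i-j+1) T(i+1,j) + (i-j-c) T(i,j) = 0`. -/
theorem statement_1 (b c : ℕ) (hb : 0 < b) (hc : 0 < c) (i j : ℕ) (hi : 0 < i) (hj : 0 < j) :
    ((b : ℚ) + i - j + 1) *
        (∑ s ∈ Finset.Icc 1 (min (i + 1) j), Afun b c (i + 1) s * Cfun b c s j)
      + ((i : ℚ) - j - c) * (∑ s ∈ Finset.Icc 1 (min i j), Afun b c i s * Cfun b c s j)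
      = 0 := by
  have hiq : (i : ℚ) ≠ 0 := Nat.cast_ne_zero.2 hi.ne'
  set N := i + j + 1 with hN
  have hext1 : ∑ s ∈ Finset.Icc 1 (min (i + 1) j), Afun b c (i + 1) s * Cfun b c s j
      = ∑ s ∈ Finset.Icc 1 N, Afun b c (i + 1) s * Cfun b c s j := by
    apply Finset.sum_subset (Finset.Icc_subset_Icc_right (by omega))
    intro x hx hx'
    simp only [Finset.mem_Icc] at hx hx'
    by_cases hxj : x ≤ j
    · rw [Afun_of_neg b c (i + 1) x (by omega), zero_mul]
    · rw [Cfun_of_neg b c x j (by omega), mul_zero]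
  have hext2 : ∑ s ∈ Finset.Icc 1 (min i j), Afun b c i s * Cfun b c s j
      = ∑ s ∈ Finset.Icc 1 N, Afun b c i s * Cfun b c s j := by
    apply Finset.sum_subset (Finset.Icc_subset_Icc_right (by omega))
    intro x hx hx'
    simp only [Finset.mem_Icc] at hx hx'
    by_cases hxj : x ≤ j
    · rw [Afun_of_neg b c i x (by omega), zero_mul]
    · rw [Cfun_of_neg b c x j (by omega), mul_zero]
  rw [hext1, hext2]
  have hsum : ∑ s ∈ Finset.Icc 1 N,
      ((i : ℚ) * (((b : ℚ) + i - j + 1) * (Afun b c (i + 1) s * Cfun b c s j))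
        + (i : ℚ) * (((i : ℚ) - j - c) * (Afun b c i s * Cfun b c s j)))
      = 0 := by
    have h1 : ∑ s ∈ Finset.Icc 1 N,
        ((i : ℚ) * (((b : ℚ) + i - j + 1) * (Afun b c (i + 1) s * Cfun b c s j))
          + (i : ℚ) * (((i : ℚ) - j - c) * (Afun b c i s * Cfun b c s j)))
        = ∑ s ∈ Finset.Icc 1 N, (Gcert b c i j s - Gcert b c i j (s + 1)) := by
      refine Finset.sum_congr rfl fun s hs => ?_
      exact key_s1 b c i j s hb hc hi hj (Finset.mem_Icc.mp hs).1
    rw [h1, telescope]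
    have hA : Gcert b c i j 1 = 0 := by
      rw [Gcert]; norm_num
    have hB : Gcert b c i j (N + 1) = 0 := by
      rw [Gcert, Cfun_of_neg b c (N + 1) j (by omega)]
      ring
    rw [hA, hB, sub_zero]
  have hfac : ∑ s ∈ Finset.Icc 1 N,
      ((i : ℚ) * (((b : ℚ) + i - j + 1) * (Afun b c (i + 1) s * Cfun b c s j))
        + (i : ℚ) * (((i : ℚ) - j - c) * (Afun b c i s * Cfun b c s j)))
      = (i : ℚ) * (((b : ℚ) + i - j + 1) *
            (∑ s ∈ Finset.Icc 1 N, Afun b c (i + 1) s * Cfun b c s j)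
          + ((i : ℚ) - j - c) * (∑ s ∈ Finset.Icc 1 N, Afun b c i s * Cfun b c s j)) := by
    rw [mul_add, Finset.mul_sum, Finset.mul_sum, Finset.mul_sum, Finset.mul_sum,
      ← Finset.sum_add_distrib]
  rw [hfac] at hsum
  exact (mul_eq_zero.mp hsum).resolve_left hiq
end

section
/- Let $b,c$ be positive integers and $n',m'$ arbitrary integers. For every positive integer $j$: $\sum_{s=1}^{j} B_{b,c,n',m'}(s)\cdot C(b,c,s,j) = \binom{n'}{j-m'}$. -/
section AuxStatement4
open Finset Polynomial

lemma fact_ne (m : ℕ) : (Nat.factorial m : ℚ) ≠ 0 :=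
  Nat.cast_ne_zero.mpr (Nat.factorial_ne_zero m)

lemma alt_step (N : ℕ) (f : ℕ → ℚ) :
    ∑ t ∈ range (N+2), (-1:ℚ)^t * ((N+1).choose t) * f t
      = ∑ t ∈ range (N+1), (-1:ℚ)^t * (N.choose t) * (f t - f (t+1)) := by
  have e1 : ∑ t ∈ range (N+2), (-1:ℚ)^t * ((N+1).choose t) * f t
      = (∑ t ∈ range (N+1), ((-1:ℚ)^(t+1) * (N.choose t) * f (t+1)
          + (-1:ℚ)^(t+1) * (N.choose (t+1)) * f (t+1))) + f 0 := by
    rw [Finset.sum_range_succ' (fun t => (-1:ℚ)^t * ((N+1).choose t) * f t) (N+1)]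
    simp only [pow_zero, Nat.choose_zero_right, Nat.cast_one, one_mul]
    congr 1
    refine Finset.sum_congr rfl fun t _ => ?_
    rw [Nat.choose_succ_succ]
    push_cast
    ring
  rw [e1, Finset.sum_add_distrib]
  have e2 : ∑ t ∈ range (N+1), (-1:ℚ)^(t+1) * (N.choose (t+1)) * f (t+1)
      = ∑ t ∈ range N, (-1:ℚ)^(t+1) * (N.choose (t+1)) * f (t+1) := by
    rw [Finset.sum_range_succ, Nat.choose_succ_self]
    simp
  have e3 : ∑ t ∈ range (N+1), (-1:ℚ)^t * (N.choose t) * f t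
      = (∑ t ∈ range N, (-1:ℚ)^(t+1) * (N.choose (t+1)) * f (t+1)) + f 0 := by
    rw [Finset.sum_range_succ' (fun t => (-1:ℚ)^t * (N.choose t) * f t) N]
    simp
  have e4 : ∑ t ∈ range (N+1), (-1:ℚ)^t * (N.choose t) * (f t - f (t+1))
      = ∑ t ∈ range (N+1), (-1:ℚ)^t * (N.choose t) * f t
        - ∑ t ∈ range (N+1), (-1:ℚ)^t * (N.choose t) * f (t+1) := by
    rw [← Finset.sum_sub_distrib]
    exact Finset.sum_congr rfl fun t _ => by ring
  have e5 : ∑ t ∈ range (N+1), (-1:ℚ)^(t+1) * (N.choose t) * f (t+1)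
      = - ∑ t ∈ range (N+1), (-1:ℚ)^t * (N.choose t) * f (t+1) := by
    rw [← Finset.sum_neg_distrib]
    refine Finset.sum_congr rfl fun t _ => ?_
    ring
  rw [e2, e4, e3, e5]
  ring

lemma alt_sum_poly : ∀ (N : ℕ) (p : Polynomial ℚ), p.natDegree < N →
    ∑ t ∈ range (N+1), (-1:ℚ)^t * (N.choose t) * p.eval (t:ℚ) = 0 := by
  intro N
  induction N with
  | zero => intro p hp; omega
  | succ N ih =>
    intro p hp
    have hstep := alt_step N (fun t => p.eval (t:ℚ))
    show ∑ t ∈ range (N+2), (-1:ℚ)^t * ((N+1).choose t) * p.eval (t:ℚ) = 0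
    rw [hstep]
    set q : Polynomial ℚ := p.comp (X + C 1) - p with hqdef
    have heval : ∀ t : ℕ, p.eval (t:ℚ) - p.eval ((t+1 : ℕ):ℚ) = -(q.eval (t:ℚ)) := by
      intro t
      simp only [hqdef, eval_sub, eval_comp, eval_add, eval_X, eval_C]
      push_cast
      ring
    by_cases hq0 : q = 0
    · refine Finset.sum_eq_zero fun t _ => ?_
      rw [heval t, hq0]
      simp
    · have hpd : p.natDegree ≠ 0 := by
        intro h
        obtain ⟨a, ha⟩ := Polynomial.natDegree_eq_zero.mp h
        apply hq0
        rw [hqdef, ← ha]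
        simp
      have hp0 : p ≠ 0 := fun h => hpd (by rw [h]; simp)
      have hcomp_ne : p.comp (X + C 1) ≠ 0 := by
        rw [Polynomial.comp_X_add_C_ne_zero_iff]; exact hp0
      have hdeg : (p.comp (X + C 1)).degree = p.degree := by
        rw [degree_eq_natDegree hcomp_ne, degree_eq_natDegree hp0, natDegree_comp,
          natDegree_X_add_C, mul_one]
      have hlc : (p.comp (X + C 1)).leadingCoeff = p.leadingCoeff := by
        rw [Polynomial.leadingCoeff_comp (by rw [natDegree_X_add_C]; exact one_ne_zero),
          leadingCoeff_X_add_C, one_pow, mul_one]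
      have hdlt : q.degree < p.degree := by
        rw [hqdef]
        exact lt_of_lt_of_eq (degree_sub_lt hdeg hcomp_ne hlc) hdeg
      have hnd : q.natDegree < p.natDegree := by
        exact Polynomial.natDegree_lt_natDegree hq0 hdlt
      have hqN : q.natDegree < N := lt_of_lt_of_le hnd (Nat.lt_succ_iff.mp hp)
      calc ∑ t ∈ range (N+1), (-1:ℚ)^t * (N.choose t) * (p.eval (t:ℚ) - p.eval ((t+1:ℕ):ℚ))
          = ∑ t ∈ range (N+1), -((-1:ℚ)^t * (N.choose t) * q.eval (t:ℚ)) := by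
            refine Finset.sum_congr rfl fun t _ => ?_
            rw [heval t]; ring
        _ = -∑ t ∈ range (N+1), (-1:ℚ)^t * (N.choose t) * q.eval (t:ℚ) := by
            rw [Finset.sum_neg_distrib]
        _ = 0 := by rw [ih q hqN, neg_zero]

lemma Tzero (b c : ℕ) (hb : 0 < b) (hc : 0 < c) {v j : ℕ} (hv : 1 ≤ v) (hvj : v < j) :
    ∑ s ∈ Finset.Icc v j, (-1 : ℚ) ^ (s - v) *
      ((Nat.factorial (b + s - 1) * Nat.factorial (c + v - 1) *
          Nat.factorial (b + s - v - 1) : ℚ) /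
        (Nat.factorial (b - 1) * Nat.factorial (v - 1) * Nat.factorial (s - v) *
          Nat.factorial (b + c + s - 1))) * Cfun b c s j = 0 := by
  set N := j - v with hNdef
  have hN1 : 1 ≤ N := by omega
  rw [← Finset.Ico_add_one_right_eq_Icc, Finset.sum_Ico_eq_sum_range]
  have hjv : j + 1 - v = N + 1 := by omega
  rw [hjv]
  set P : Polynomial ℚ := (descPochhammer ℚ (N-1)).comp (X + C ((b:ℚ) - 1)) with hP
  have hPeval : ∀ t : ℕ, P.eval (t:ℚ) = ((b + t - 1).descFactorial (N-1) : ℚ) := by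
    intro t
    rw [hP, eval_comp, eval_add, eval_X, eval_C]
    have hcast : (t:ℚ) + ((b:ℚ) - 1) = ((b + t - 1 : ℕ) : ℚ) := by
      have h1 : (1:ℕ) ≤ b + t := by omega
      push_cast [Nat.cast_sub h1]
      ring
    rw [hcast, descPochhammer_eval_eq_descFactorial]
  set K : ℚ := (Nat.factorial b * Nat.factorial (j-1) * Nat.factorial (c+v-1) : ℚ) /
      (Nat.factorial (b-1) * Nat.factorial (v-1) * Nat.factorial (c+j-1) *
        Nat.factorial N) with hK
  have key : ∀ t ∈ range (N+1),
      (-1 : ℚ) ^ (v + t - v) *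
        ((Nat.factorial (b + (v + t) - 1) * Nat.factorial (c + v - 1) *
            Nat.factorial (b + (v + t) - v - 1) : ℚ) /
          (Nat.factorial (b - 1) * Nat.factorial (v - 1) * Nat.factorial (v + t - v) *
            Nat.factorial (b + c + (v + t) - 1))) * Cfun b c (v + t) j
        = K * ((-1:ℚ)^t * (N.choose t) * P.eval (t:ℚ)) := by
    intro t ht
    rw [Finset.mem_range] at ht
    have ht' : t ≤ N := by omega
    have e1 : b + (v + t) - v - 1 = b + t - 1 := by omega
    have e2 : v + t - v = t := by omega
    rw [e1, e2, hPeval t]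
    by_cases hcase : j ≤ b + (v + t)
    · rw [Cfun, if_pos ⟨by omega, hcase⟩]
      have e3 : j - (v + t) = N - t := by omega
      have e4 : b + (v + t) - j = b + t - N := by omega
      rw [e3, e4]
      have h1 : ((N.choose t : ℚ)) * (Nat.factorial t) * (Nat.factorial (N - t))
          = Nat.factorial N := by
        exact_mod_cast Nat.choose_mul_factorial_mul_factorial ht'
      have h2 : ((Nat.factorial (b + t - N) : ℚ)) * ((b + t - 1).descFactorial (N - 1))
          = Nat.factorial (b + t - 1) := by
        have h := Nat.factorial_mul_descFactorial (n := b + t - 1) (k := N - 1) (by omega)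
        have e5 : b + t - 1 - (N - 1) = b + t - N := by omega
        rw [e5] at h
        exact_mod_cast h
      have hch : ((N.choose t : ℚ)) ≠ 0 :=
        Nat.cast_ne_zero.mpr (Nat.choose_pos ht').ne'
      rw [← h2, hK, ← h1]
      field_simp
    · rw [Cfun, if_neg (fun h => hcase h.2)]
      have hD : (b + t - 1).descFactorial (N - 1) = 0 :=
        Nat.descFactorial_eq_zero_iff_lt.mpr (by omega)
      rw [hD]
      simp

  rw [Finset.sum_congr rfl key, ← Finset.mul_sum,
    alt_sum_poly N P (by rw [hP, natDegree_comp, descPochhammer_natDegree,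
      natDegree_X_add_C, mul_one]; omega), mul_zero]

lemma Tone (b c : ℕ) (hb : 0 < b) (hc : 0 < c) {j : ℕ} (hj : 1 ≤ j) :
    ∑ s ∈ Finset.Icc j j, (-1 : ℚ) ^ (s - j) *
      ((Nat.factorial (b + s - 1) * Nat.factorial (c + j - 1) *
          Nat.factorial (b + s - j - 1) : ℚ) /
        (Nat.factorial (b - 1) * Nat.factorial (j - 1) * Nat.factorial (s - j) *
          Nat.factorial (b + c + s - 1))) * Cfun b c s j = 1 := by
  rw [Finset.Icc_self, Finset.sum_singleton]
  rw [Cfun, if_pos ⟨le_refl j, by omega⟩]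
  have e1 : b + j - j - 1 = b - 1 := by omega
  have e2 : j - j = 0 := by omega
  have e3 : b + j - j = b := by omega
  rw [e1, e2, e3]
  simp only [Nat.factorial_zero, pow_zero, Nat.cast_one, one_mul, mul_one]
  field_simp

end AuxStatement4

/-- `∑_{s=1}^{j} B(s) ⬝ C(b,c,s,j) = binom(n', j-m')`. -/
theorem statement_4 (b c : ℕ) (hb : 0 < b) (hc : 0 < c) (n' m' : ℤ) (j : ℕ) (hj : 0 < j) :
    ∑ s ∈ Finset.Icc 1 j, Bfun b c n' m' s * Cfun b c s j = ibinom n' ((j : ℤ) - m') := by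
  have hswap : ∑ s ∈ Finset.Icc 1 j, Bfun b c n' m' s * Cfun b c s j
      = ∑ v ∈ Finset.Icc 1 j, ∑ s ∈ Finset.Icc v j,
          ((-1 : ℚ) ^ (s - v) *
            ((Nat.factorial (b + s - 1) * Nat.factorial (c + v - 1) *
                Nat.factorial (b + s - v - 1) : ℚ) /
              (Nat.factorial (b - 1) * Nat.factorial (v - 1) * Nat.factorial (s - v) *
                Nat.factorial (b + c + s - 1))) * ibinom n' ((v : ℤ) - m'))
            * Cfun b c s j := by
    unfold Bfun
    rw [Finset.sum_congr rfl fun s _ => Finset.sum_mul _ _ (Cfun b c s j)]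
    exact Finset.sum_comm' (fun x y => by simp only [Finset.mem_Icc]; omega)
  rw [hswap]
  have hpull : ∀ v ∈ Finset.Icc 1 j,
      (∑ s ∈ Finset.Icc v j,
          ((-1 : ℚ) ^ (s - v) *
            ((Nat.factorial (b + s - 1) * Nat.factorial (c + v - 1) *
                Nat.factorial (b + s - v - 1) : ℚ) /
              (Nat.factorial (b - 1) * Nat.factorial (v - 1) * Nat.factorial (s - v) *
                Nat.factorial (b + c + s - 1))) * ibinom n' ((v : ℤ) - m'))
            * Cfun b c s j)
      = ibinom n' ((v : ℤ) - m') * ∑ s ∈ Finset.Icc v j, (-1 : ℚ) ^ (s - v) *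
          ((Nat.factorial (b + s - 1) * Nat.factorial (c + v - 1) *
              Nat.factorial (b + s - v - 1) : ℚ) /
            (Nat.factorial (b - 1) * Nat.factorial (v - 1) * Nat.factorial (s - v) *
              Nat.factorial (b + c + s - 1))) * Cfun b c s j := by
    intro v _
    rw [Finset.mul_sum]
    exact Finset.sum_congr rfl fun s _ => by ring
  rw [Finset.sum_congr rfl hpull]
  rw [Finset.sum_eq_single_of_mem j (Finset.mem_Icc.mpr ⟨hj, le_refl j⟩)
    (fun v hv hne => by
      rw [Tzero b c hb hc (Finset.mem_Icc.mp hv).1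
        (lt_of_le_of_ne (Finset.mem_Icc.mp hv).2 hne), mul_zero])]
  rw [Tone b c hb hc hj, mul_one]
end
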